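/- Let p : E → S be a hyperconnected essential geometric morphism such that p_! preserves finite products. Then the full subcategory Dec(E) → E of decidable objects of E factors through the full subcategory p* : S → E; that is, every decidable object of E is isomorphic to p* A for some A in S. -/

import Mathlib

open CategoryTheory CategoryTheory.Limits

/-- A morphism `i : X ⟶ Z` is a (binary coproduct) summand if there is a morphism
`j : Y ⟶ Z` such that the cospan `X ⟶ Z ⟵ Y` is a coproduct cocone. -/
def IsSummand {C : Type*} [Category C] {X Z : C} (i : X ⟶ Z) : Prop :=
  ∃ (Y : C) (j : Y ⟶ Z), Nonempty (IsColimit (BinaryCofan.mk i j))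

/-- An object `X` is decidable if its diagonal `X ⟶ X ⨯ X` is a coproduct summand. -/
noncomputable def IsDecidableObj {C : Type*} [Category C] [HasBinaryProducts C] (X : C) : Prop :=
  IsSummand (diag X)

/-- A subobject classifier. -/
structure Classifier (C : Type*) [Category C] [HasTerminal C] where
  Ω : C
  truth : ⊤_ C ⟶ Ω
  char : ∀ {U X : C} (m : U ⟶ X), Mono m → (X ⟶ Ω)
  isPullback : ∀ {U X : C} (m : U ⟶ X) (hm : Mono m),
    IsPullback m (terminal.from U) (char m hm) truth
  uniq : ∀ {U X : C} (m : U ⟶ X) (hm : Mono m) (c : X ⟶ Ω),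
    IsPullback m (terminal.from U) c truth → c = char m hm

/-- An elementary topos: finite limits, cartesian closedness (each functor `X ⨯ -` is a
left adjoint) and a subobject classifier. -/
def IsElemTopos (C : Type*) [Category C] [HasFiniteLimits C] : Prop :=
  (∀ X : C, (prod.functor.obj X).IsLeftAdjoint) ∧ Nonempty (_root_.Classifier C)
section Aux

variable {E : Type*} [Category E] [HasFiniteLimits E] [HasFiniteColimits E]

lemma aux_isIso_to_initial (hcc : ∀ X : E, (prod.functor.obj X).IsLeftAdjoint)
    {T : E} (f : T ⟶ ⊥_ E) : IsIso f := by
  haveI := hcc T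
  haveI : PreservesColimitsOfSize.{0, 0} (prod.functor.obj T) :=
    (Adjunction.ofIsLeftAdjoint (prod.functor.obj T)).leftAdjoint_preservesColimits
  have hI : IsInitial (T ⨯ (⊥_ E)) := initialIsInitial.isInitialObj (prod.functor.obj T)
  have h2 : (prod.snd : T ⨯ (⊥_ E) ⟶ _) ≫ initial.to T = prod.fst := hI.hom_ext _ _
  have hfg : f ≫ initial.to T = 𝟙 T := by
    have : prod.lift (𝟙 T) f ≫ (prod.snd ≫ initial.to T) = 𝟙 T := by
      rw [h2, prod.lift_fst]
    calc f ≫ initial.to T = prod.lift (𝟙 T) f ≫ (prod.snd ≫ initial.to T) := by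
          rw [← Category.assoc, prod.lift_snd]
      _ = 𝟙 T := this
  exact ⟨initial.to T, hfg, initial.hom_ext _ _⟩

lemma aux_eq_of_to_initial (hcc : ∀ X : E, (prod.functor.obj X).IsLeftAdjoint)
    {T Z : E} (f : T ⟶ ⊥_ E) (u v : T ⟶ Z) : u = v := by
  haveI := aux_isIso_to_initial hcc f
  have h : inv f ≫ u = inv f ≫ v := initial.hom_ext _ _
  calc u = f ≫ (inv f ≫ u) := by simp
    _ = f ≫ (inv f ≫ v) := by rw [h]
    _ = v := by simp

lemma aux_mono_initial_to (hcc : ∀ X : E, (prod.functor.obj X).IsLeftAdjoint)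
    (Z : E) : Mono (initial.to Z) :=
  ⟨fun u v _ => aux_eq_of_to_initial hcc u u v⟩

lemma Classifier.comm (c : _root_.Classifier E) {U X : E} (m : U ⟶ X) (hm : Mono m) :
    m ≫ c.char m hm = terminal.from U ≫ c.truth := (c.isPullback m hm).w

lemma Classifier.factor (c : _root_.Classifier E) {U X T : E} (m : U ⟶ X) (hm : Mono m) (t : T ⟶ X)
    (h : t ≫ c.char m hm = terminal.from T ≫ c.truth) : ∃ s : T ⟶ U, s ≫ m = t :=
  ⟨(c.isPullback m hm).lift t (terminal.from T) h, (c.isPullback m hm).lift_fst _ _ _⟩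

lemma aux_isIso_of_mono_of_epi (c : _root_.Classifier E) {U X : E} (m : U ⟶ X) (hm : Mono m)
    (he : Epi m) : IsIso m := by
  have h1 : c.char m hm = terminal.from X ≫ c.truth := by
    rw [← cancel_epi m, c.comm m hm, ← Category.assoc, terminal.comp_from]
  obtain ⟨s, hs⟩ := c.factor m hm (𝟙 X) (by rw [Category.id_comp, h1])
  haveI : IsSplitEpi m := ⟨⟨⟨s, hs⟩⟩⟩
  exact isIso_of_mono_of_isSplitEpi m

lemma aux_exists_image (c : _root_.Classifier E) {A B : E} (f : A ⟶ B) :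
    ∃ (I : E) (e : A ⟶ I) (m : I ⟶ B), Epi e ∧ Mono m ∧ e ≫ m = f := by
  let u : B ⟶ pushout f f := pushout.inl f f
  let v : B ⟶ pushout f f := pushout.inr f f
  refine ⟨equalizer u v, equalizer.lift f pushout.condition, equalizer.ι u v, ?_,
    inferInstance, equalizer.lift_ι f _⟩
  set e : A ⟶ equalizer u v := equalizer.lift f pushout.condition with he
  set m : equalizer u v ⟶ B := equalizer.ι u v with hmdef
  refine ⟨fun {Z} a b hab => ?_⟩
  set ι : equalizer a b ⟶ equalizer u v := equalizer.ι a b with hι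
  have hι2 : Mono (ι ≫ m) := mono_comp _ _
  set χ := c.char (ι ≫ m) hι2 with hχ
  have hf : f = (equalizer.lift e hab ≫ ι) ≫ m := by
    rw [equalizer.lift_ι, equalizer.lift_ι]
  have hf2 : f ≫ χ = f ≫ (terminal.from B ≫ c.truth) := by
    rw [hf, Category.assoc, Category.assoc, ← Category.assoc ι m, c.comm _ hι2]
    simp only [← Category.assoc, terminal.comp_from]
  have hmu : m ≫ u = m ≫ v := equalizer.condition u v
  have hm2 : m ≫ χ = terminal.from _ ≫ c.truth := by
    calc m ≫ χ = m ≫ u ≫ pushout.desc χ (terminal.from B ≫ c.truth) hf2 := by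
          rw [pushout.inl_desc]
      _ = m ≫ v ≫ pushout.desc χ (terminal.from B ≫ c.truth) hf2 := by
          rw [← Category.assoc, hmu, Category.assoc]
      _ = m ≫ terminal.from B ≫ c.truth := by rw [pushout.inr_desc]
      _ = terminal.from _ ≫ c.truth := by rw [← Category.assoc, terminal.comp_from]
  obtain ⟨s, hs⟩ := c.factor (ι ≫ m) hι2 m hm2
  have hsι : s ≫ ι = 𝟙 _ := by
    rw [← cancel_mono m, Category.assoc, hs, Category.id_comp]
  have hab2 : ι ≫ a = ι ≫ b := equalizer.condition a b
  calc a = (s ≫ ι) ≫ a := by rw [hsι, Category.id_comp]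
    _ = (s ≫ ι) ≫ b := by rw [Category.assoc, hab2, Category.assoc]
    _ = b := by rw [hsι, Category.id_comp]

end Aux

section Geo

variable {E S : Type*} [Category E] [Category S]
variable [HasFiniteLimits E] [HasFiniteColimits E] [HasFiniteLimits S]

lemma aux_sub_image (cE : _root_.Classifier E)
    (pStar : S ⥤ E) (pLower : E ⥤ S) (adj : pStar ⊣ pLower) [PreservesFiniteLimits pStar]
    [pStar.Full] [pStar.Faithful]
    (hcounit : ∀ X : E, Mono (adj.counit.app X))
    {A : S} {U : E} (m : U ⟶ pStar.obj A) (hm : Mono m) :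
    ∃ (B : S) (n : B ⟶ A) (_ : Mono n) (iso : U ≅ pStar.obj B),
      iso.hom ≫ pStar.map n = m := by
  set Ω := cE.Ω with hΩ
  set χ : pStar.obj A ⟶ Ω := cE.char m hm with hχdef
  set σ : A ⟶ pLower.obj Ω := adj.unit.app A ≫ pLower.map χ with hσ
  have hχ : pStar.map σ ≫ adj.counit.app Ω = χ := by
    rw [hσ, Functor.map_comp, Category.assoc]
    have := adj.counit.naturality χ
    simp only [Functor.comp_map, Functor.id_map] at this
    rw [this, ← Category.assoc, adj.left_triangle_components, Category.id_comp]
  set θ : pStar.obj (⊤_ S) ≅ ⊤_ E := PreservesTerminal.iso pStar with hθ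
  set τ : (⊤_ S) ⟶ pLower.obj Ω := adj.homEquiv _ _ (θ.hom ≫ cE.truth) with hτdef
  have hτ : pStar.map τ ≫ adj.counit.app Ω = θ.hom ≫ cE.truth := by
    calc pStar.map τ ≫ adj.counit.app Ω = (adj.homEquiv _ _).symm τ :=
          (adj.homEquiv_counit _ _ τ).symm
      _ = θ.hom ≫ cE.truth := by rw [hτdef]; exact (adj.homEquiv _ _).symm_apply_apply _
  haveI hMε : Mono (adj.counit.app Ω) := hcounit Ω
  have comm : m ≫ pStar.map σ = (terminal.from U ≫ θ.inv) ≫ pStar.map τ := by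
    rw [← cancel_mono (adj.counit.app Ω), Category.assoc, Category.assoc, Category.assoc,
      hχ, hτ, cE.comm m hm, ← Category.assoc θ.inv, θ.inv_hom_id, Category.id_comp]
  have hpb : IsPullback m (terminal.from U ≫ θ.inv) (pStar.map σ) (pStar.map τ) := by
    apply IsPullback.of_isLimit' ⟨comm⟩
    refine PullbackCone.IsLimit.mk _ (fun s => ?_) (fun s => ?_) (fun s => ?_)
      (fun s l h₁ _ => ?_)
    · refine (cE.isPullback m hm).lift s.fst (terminal.from s.pt) ?_
      have hw := s.condition
      calc s.fst ≫ χ = (s.fst ≫ pStar.map σ) ≫ adj.counit.app Ω := by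
            rw [← hχ, Category.assoc]
        _ = (s.snd ≫ pStar.map τ) ≫ adj.counit.app Ω := by rw [hw]
        _ = (s.snd ≫ θ.hom) ≫ cE.truth := by rw [Category.assoc, hτ, Category.assoc]
        _ = terminal.from s.pt ≫ cE.truth := by
            rw [terminal.hom_ext (s.snd ≫ θ.hom) (terminal.from s.pt)]
    · exact (cE.isPullback m hm).lift_fst _ _ _
    · rw [← cancel_mono θ.hom]
      simp only [Category.assoc, Iso.inv_hom_id, Category.comp_id, terminal.comp_from]
      exact terminal.hom_ext _ _
    · apply (cancel_mono m).mp
      rw [(cE.isPullback m hm).lift_fst, h₁]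
  haveI : Mono τ := ⟨fun u v _ => terminal.hom_ext _ _⟩
  have sqS : IsPullback (pullback.fst σ τ) (pullback.snd σ τ) σ τ := IsPullback.of_hasPullback σ τ
  have sqE := sqS.map pStar
  refine ⟨pullback σ τ, pullback.fst σ τ, inferInstance, hpb.isoIsPullback _ _ sqE, ?_⟩
  exact hpb.isoIsPullback_hom_fst _ _ sqE

lemma aux_unit_epi (cE : _root_.Classifier E)
    (pStar : S ⥤ E) (pLower : E ⥤ S) (adj : pStar ⊣ pLower) [PreservesFiniteLimits pStar]
    [pStar.Full] [pStar.Faithful]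
    (hcounit : ∀ X : E, Mono (adj.counit.app X))
    (pShriek : E ⥤ S) (adjEss : pShriek ⊣ pStar) (X : E) :
    Epi (adjEss.unit.app X) := by
  obtain ⟨I, e, m, he, hmono, hem⟩ := aux_exists_image cE (adjEss.unit.app X)
  obtain ⟨B, n, hn, iso, hiso⟩ := aux_sub_image cE pStar pLower adj hcounit m hmono
  have h1 : (adjEss.homEquiv X (pShriek.obj X)).symm (adjEss.unit.app X) = 𝟙 _ := by
    have : adjEss.homEquiv X (pShriek.obj X) (𝟙 _) = adjEss.unit.app X := by
      rw [Adjunction.homEquiv_unit]; simp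
    rw [← this, Equiv.symm_apply_apply]
  have h3 : (e ≫ iso.hom) ≫ pStar.map n = adjEss.unit.app X := by
    rw [Category.assoc, hiso, hem]
  have h4 : (adjEss.homEquiv X B).symm (e ≫ iso.hom) ≫ n = 𝟙 _ := by
    rw [← Adjunction.homEquiv_naturality_right_symm, h3, h1]
  haveI : Mono n := hn
  haveI : IsSplitEpi n := ⟨⟨⟨_, h4⟩⟩⟩
  haveI : IsIso n := isIso_of_mono_of_isSplitEpi n
  haveI : IsIso m := by rw [← hiso]; infer_instance
  rw [← hem]
  exact @epi_comp _ _ _ _ _ e he m inferInstance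

end Geo

lemma aux_comp_terminal_congr {E : Type*} [Category E] [HasTerminal E] {P W : E}
    (x y : P ⟶ ⊤_ E) (t : (⊤_ E) ⟶ W) : x ≫ t = y ≫ t := by
  rw [terminal.hom_ext x y]

/-- If `p : E → S` is a hyperconnected essential geometric morphism (inverse image
`pStar` fully faithful with monic counit for `pStar ⊣ pLower`, and a left adjoint
`pShriek`) such that `pShriek` preserves finite products, then every decidable object of
`E` lies in the image of `pStar` up to isomorphism. -/
theorem decidable_in_image_of_inverse_image
    {E S : Type*} [Category E] [Category S]
    [HasFiniteLimits E] [HasFiniteColimits E] [HasFiniteLimits S] [HasFiniteColimits S]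
    (hE : IsElemTopos E) (hS : IsElemTopos S)
    (pStar : S ⥤ E) (pLower : E ⥤ S) (adj : pStar ⊣ pLower) [PreservesFiniteLimits pStar]
    -- hyperconnected: `pStar` fully faithful and the counit of `pStar ⊣ pLower` monic
    [pStar.Full] [pStar.Faithful]
    (hcounit : ∀ X : E, Mono (adj.counit.app X))
    -- essential with finite-product preserving leftmost adjoint
    (pShriek : E ⥤ S) (adjEss : pShriek ⊣ pStar)
    [PreservesFiniteProducts pShriek] :
    ∀ X : E, IsDecidableObj X → ∃ A : S, Nonempty (X ≅ pStar.obj A) := by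
  intro X hX
  obtain ⟨hcc, ⟨cE⟩⟩ := hE
  obtain ⟨Y, j, ⟨colim⟩⟩ := hX
  have hδm : Mono (diag X) := by
    haveI : IsSplitMono (diag X) := IsSplitMono.mk' ⟨prod.fst, prod.lift_fst _ _⟩
    infer_instance
  have h0T : Mono (initial.to (⊤_ E)) := aux_mono_initial_to hcc _
  set falseE : (⊤_ E) ⟶ cE.Ω := cE.char (initial.to (⊤_ E)) h0T with hfalse
  -- disjointness of the two summands
  have hdisj : ∀ {T : E} (t₁ : T ⟶ X) (t₂ : T ⟶ Y), t₁ ≫ diag X = t₂ ≫ j → (T ⟶ ⊥_ E) := by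
    intro T t₁ t₂ hcomm
    let cfan : Cocone (pair X Y) :=
      BinaryCofan.mk (terminal.from X ≫ cE.truth) (terminal.from Y ≫ falseE)
    have hψ1 : diag X ≫ colim.desc cfan = terminal.from X ≫ cE.truth :=
      colim.fac cfan ⟨WalkingPair.left⟩
    have hψ2 : j ≫ colim.desc cfan = terminal.from Y ≫ falseE :=
      colim.fac cfan ⟨WalkingPair.right⟩
    have heq : terminal.from T ≫ cE.truth = terminal.from T ≫ falseE := by
      have h := congrArg (fun q => q ≫ colim.desc cfan) hcomm
      erw [Category.assoc, Category.assoc, hψ1, hψ2, ← Category.assoc, ← Category.assoc, terminal.comp_from,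
        terminal.comp_from] at h
      exact h
    exact (cE.isPullback (initial.to (⊤_ E)) h0T).lift (terminal.from T) (terminal.from T) heq.symm
  -- any "empty" predicate equals the classifying map of ⊥ ↪ Z
  have hinit_pb : ∀ {Z : E} (hZ : Mono (initial.to Z)) (c' : Z ⟶ cE.Ω),
      (∀ {T : E} (u : T ⟶ Z), u ≫ c' = terminal.from T ≫ cE.truth → (T ⟶ ⊥_ E)) →
      c' = cE.char (initial.to Z) hZ := by
    intro Z hZ c' hlift
    apply cE.uniq _ hZ
    apply IsPullback.of_isLimit' ⟨initial.hom_ext _ _⟩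
    refine PullbackCone.IsLimit.mk _
      (fun s => hlift s.fst
        (by rw [s.condition, terminal.hom_ext s.snd (terminal.from s.pt)]))
      (fun s => ?_) (fun s => ?_) (fun s l _ _ => ?_)
    · exact aux_eq_of_to_initial hcc (hlift s.fst
        (by rw [s.condition, terminal.hom_ext s.snd (terminal.from s.pt)])) _ _
    · exact aux_eq_of_to_initial hcc (hlift s.fst
        (by rw [s.condition, terminal.hom_ext s.snd (terminal.from s.pt)])) _ _
    · exact aux_eq_of_to_initial hcc l _ _
  have hY0 : Mono (initial.to Y) := aux_mono_initial_to hcc Y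
  have hj : j ≫ cE.char (diag X) hδm = terminal.from Y ≫ falseE := by
    have e1 : j ≫ cE.char (diag X) hδm = cE.char (initial.to Y) hY0 := by
      apply hinit_pb hY0
      intro T u hu
      rw [← Category.assoc] at hu
      exact hdisj ((cE.isPullback (diag X) hδm).lift (u ≫ j) (terminal.from T) hu) u
        ((cE.isPullback (diag X) hδm).lift_fst _ _ _)
    have e2 : terminal.from Y ≫ falseE = cE.char (initial.to Y) hY0 := by
      apply hinit_pb hY0
      intro T u hu
      rw [← Category.assoc, terminal.comp_from] at hu
      exact (cE.isPullback (initial.to (⊤_ E)) h0T).lift (terminal.from T) (terminal.from T) hu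
    exact e1.trans e2.symm
  -- the functor pShriek ⋙ pStar preserves the coproduct decomposition
  haveI : PreservesColimitsOfSize.{0, 0} pShriek := adjEss.leftAdjoint_preservesColimits
  haveI : PreservesColimitsOfSize.{0, 0} pStar := adj.leftAdjoint_preservesColimits
  have Rcolim := isColimitOfPreserves pStar (isColimitOfPreserves pShriek colim)
  let ξcone : Cocone ((pair X Y ⋙ pShriek) ⋙ pStar) :=
    { pt := cE.Ω
      ι := Discrete.natTrans (fun i => match i with
        | ⟨WalkingPair.left⟩ => terminal.from (pStar.obj (pShriek.obj X)) ≫ cE.truth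
        | ⟨WalkingPair.right⟩ => terminal.from (pStar.obj (pShriek.obj Y)) ≫ falseE) }
  set ξ := Rcolim.desc ξcone with hξdef
  have hξ1 : pStar.map (pShriek.map (diag X)) ≫ ξ =
      terminal.from (pStar.obj (pShriek.obj X)) ≫ cE.truth :=
    Rcolim.fac ξcone ⟨WalkingPair.left⟩
  have hξ2 : pStar.map (pShriek.map j) ≫ ξ =
      terminal.from (pStar.obj (pShriek.obj Y)) ≫ falseE :=
    Rcolim.fac ξcone ⟨WalkingPair.right⟩
  have hnat : ∀ {W V : E} (f : W ⟶ V),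
      f ≫ adjEss.unit.app V = adjEss.unit.app W ≫ pStar.map (pShriek.map f) := by
    intro W V f
    have h := adjEss.unit.naturality f
    simpa using h
  have hχfac : adjEss.unit.app (X ⨯ X) ≫ ξ = cE.char (diag X) hδm := by
    apply colim.hom_ext
    rintro ⟨(_ | _)⟩
    · show diag X ≫ adjEss.unit.app (X ⨯ X) ≫ ξ = diag X ≫ cE.char (diag X) hδm
      calc diag X ≫ adjEss.unit.app (X ⨯ X) ≫ ξ
          = (adjEss.unit.app X ≫ pStar.map (pShriek.map (diag X))) ≫ ξ := by
            erw [← Category.assoc, hnat]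
        _ = adjEss.unit.app X ≫ terminal.from (pStar.obj (pShriek.obj X)) ≫ cE.truth := by
            erw [Category.assoc, hξ1]
        _ = terminal.from X ≫ cE.truth := by
            rw [← Category.assoc]; exact aux_comp_terminal_congr _ _ _
        _ = diag X ≫ cE.char (diag X) hδm := (cE.comm _ hδm).symm
    · show j ≫ adjEss.unit.app (X ⨯ X) ≫ ξ = j ≫ cE.char (diag X) hδm
      calc j ≫ adjEss.unit.app (X ⨯ X) ≫ ξ
          = (adjEss.unit.app Y ≫ pStar.map (pShriek.map j)) ≫ ξ := by
            erw [← Category.assoc, hnat]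
        _ = adjEss.unit.app Y ≫ terminal.from (pStar.obj (pShriek.obj Y)) ≫ falseE := by
            erw [Category.assoc, hξ2]
        _ = terminal.from Y ≫ falseE := by
            rw [← Category.assoc]; exact aux_comp_terminal_congr _ _ _
        _ = j ≫ cE.char (diag X) hδm := hj.symm
  -- the unit is monic on X
  haveI : IsIso (prodComparison (pShriek ⋙ pStar) X X) := by
    rw [← PreservesLimitPair.iso_hom]
    infer_instance
  have hmono : Mono (adjEss.unit.app X) := by
    refine ⟨fun {T} a b hab => ?_⟩
    have hdf : diag X ≫ (prod.fst : X ⨯ X ⟶ X) = 𝟙 X := prod.lift_fst _ _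
    have hds : diag X ≫ (prod.snd : X ⨯ X ⟶ X) = 𝟙 X := prod.lift_snd _ _
    have hg : prod.lift a b ≫ adjEss.unit.app (X ⨯ X) =
        (a ≫ adjEss.unit.app X) ≫ pStar.map (pShriek.map (diag X)) := by
      rw [← cancel_mono (prodComparison (pShriek ⋙ pStar) X X)]
      apply Limits.prod.hom_ext
      · simp only [Category.assoc, prodComparison_fst, Functor.comp_map]
        rw [← hnat (prod.fst : X ⨯ X ⟶ X), ← pStar.map_comp, ← pShriek.map_comp, hdf]
        simp [prod.lift_fst_assoc]
      · simp only [Category.assoc, prodComparison_snd, Functor.comp_map]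
        rw [← hnat (prod.snd : X ⨯ X ⟶ X), ← pStar.map_comp, ← pShriek.map_comp, hds]
        simp [hab, prod.lift_snd_assoc]
    have hc : prod.lift a b ≫ cE.char (diag X) hδm = terminal.from T ≫ cE.truth := by
      calc prod.lift a b ≫ cE.char (diag X) hδm
          = (prod.lift a b ≫ adjEss.unit.app (X ⨯ X)) ≫ ξ := by
            erw [Category.assoc, hχfac]
        _ = (a ≫ adjEss.unit.app X) ≫ pStar.map (pShriek.map (diag X)) ≫ ξ := by
            erw [hg, Category.assoc]
        _ = (a ≫ adjEss.unit.app X) ≫ terminal.from (pStar.obj (pShriek.obj X)) ≫ cE.truth := by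
            rw [hξ1]
        _ = terminal.from T ≫ cE.truth := by
            rw [← Category.assoc]; exact aux_comp_terminal_congr _ _ _
    obtain ⟨s, hs⟩ := cE.factor (diag X) hδm (prod.lift a b) hc
    have ha : s = a := by
      have h' := congrArg (fun q => q ≫ prod.fst) hs
      simpa [diag, prod.lift_fst] using h'
    have hb : s = b := by
      have h' := congrArg (fun q => q ≫ prod.snd) hs
      simpa [diag, prod.lift_snd] using h'
    rw [← ha, hb]
  have hepi : Epi (adjEss.unit.app X) := aux_unit_epi cE pStar pLower adj hcounit pShriek adjEss X
  haveI := hmono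
  haveI := hepi
  haveI := aux_isIso_of_mono_of_epi cE (adjEss.unit.app X) hmono hepi
  exact ⟨pShriek.obj X, ⟨asIso (adjEss.unit.app X)⟩⟩
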